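/- Let 0 < δ ≤ 1/(64·d²·L) and let x, y ∈ ℝ^d satisfy x = y − δ∇U(y) + √(2δ)·T. Then the matrix I − δ∇²U(y) is invertible and |det(I − δ∇²U(y))^{-1} − (1 + δ·tr(∇²U(x)))| ≤ 8·δ^{3/2}·d·L^{3/2}·(‖x‖₂ + 1). -/

import Mathlib

open Finset

/-- The Hessian matrix of `U : ℝ^d → ℝ` at `x`. -/
noncomputable def hessMat {d : ℕ} (U : EuclideanSpace ℝ (Fin d) → ℝ)
    (x : EuclideanSpace ℝ (Fin d)) : Matrix (Fin d) (Fin d) ℝ :=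
  fun i j =>
    iteratedFDeriv ℝ 2 U x ![EuclideanSpace.single i 1, EuclideanSpace.single j 1]

-- Bernoulli-type upper bound
lemma pow_one_add_le {n : ℕ} {ε : ℝ} (h0 : 0 ≤ ε) (h : (n : ℝ) * ε ≤ 1/2) :
    (1 + ε) ^ n ≤ 1 + 2 * n * ε := by
  induction n with
  | zero => simp
  | succ m ih =>
    have hm : (m : ℝ) * ε ≤ 1/2 := by
      have : (m : ℝ) ≤ (m + 1 : ℕ) := by push_cast; linarith
      nlinarith
    have h2 : 2 * (m : ℝ) * ε ≤ 1 := by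
      have : ((m+1 : ℕ) : ℝ) * ε ≤ 1/2 := h
      push_cast at this
      nlinarith
    have ih' := ih hm
    have : (1 + ε) ^ (m + 1) = (1 + ε) ^ m * (1 + ε) := by ring
    rw [this]
    push_cast
    nlinarith [pow_nonneg (by linarith : (0:ℝ) ≤ 1 + ε) m]

lemma abs_prod_one_add_sub {ι : Type*} [DecidableEq ι] (s : Finset ι) (b : ι → ℝ)
    (h : ∑ i ∈ s, |b i| ≤ 1) :
    |(∏ i ∈ s, (1 + b i)) - (1 + ∑ i ∈ s, b i)| ≤ (∑ i ∈ s, |b i|) ^ 2 := by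
  induction s using Finset.induction_on with
  | empty => simp
  | insert _ _ ha ih =>
    rename_i a s
    rw [Finset.sum_insert ha] at h
    rw [Finset.prod_insert ha, Finset.sum_insert ha, Finset.sum_insert ha]
    have hSa : 0 ≤ ∑ i ∈ s, |b i| := Finset.sum_nonneg fun i _ => abs_nonneg _
    have hS1 : ∑ i ∈ s, |b i| ≤ 1 := by
      have := abs_nonneg (b a); linarith
    have ih' := ih hS1
    set P := ∏ i ∈ s, (1 + b i)
    set S := ∑ i ∈ s, b i
    set Sa := ∑ i ∈ s, |b i|
    have hSabs : |S| ≤ Sa := Finset.abs_sum_le_sum_abs _ _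
    have key : (1 + b a) * P - (1 + (b a + S)) = (1 + b a) * (P - (1 + S)) + b a * S := by
      ring
    rw [key]
    have e1 : |(1 + b a) * (P - (1 + S))| ≤ (1 + |b a|) * Sa^2 := by
      rw [abs_mul]
      exact mul_le_mul ((abs_add_le 1 (b a)).trans (by simp)) ih' (abs_nonneg _) (by positivity)
    have e2 : |b a * S| ≤ |b a| * Sa := by
      rw [abs_mul]
      exact mul_le_mul_of_nonneg_left hSabs (abs_nonneg _)
    have h1 : |(1 + b a) * (P - (1 + S)) + b a * S| ≤ (1 + |b a|) * Sa^2 + |b a| * Sa :=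
      (abs_add_le _ _).trans (by linarith)
    nlinarith [abs_nonneg (b a), sq_nonneg Sa,
      mul_nonneg (mul_nonneg (abs_nonneg (b a)) hSa) (sub_nonneg.2 hS1)]

lemma card_perm_support_subset {n : ℕ} (s : Finset (Fin n)) :
    (Finset.univ.filter fun σ : Equiv.Perm (Fin n) => σ.support ⊆ s).card ≤ Nat.factorial s.card := by
  classical
  have key : ∀ σ : Equiv.Perm (Fin n), σ.support ⊆ s → ∀ x, x ∈ s ↔ σ x ∈ s := by
    intro σ hσ x
    constructor
    · intro hx
      by_cases hxs : σ x = x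
      · rwa [hxs]
      · exact hσ (Equiv.Perm.apply_mem_support.2 (Equiv.Perm.mem_support.2 hxs))
    · intro hx
      by_contra hxs
      have hfix : σ x = x := by
        by_contra hne
        exact hxs (hσ (Equiv.Perm.mem_support.2 hne))
      rw [hfix] at hx
      exact hxs hx
  set f : Equiv.Perm (Fin n) → Equiv.Perm {x // x ∈ s} := fun σ =>
    if h : ∀ x, σ x ∈ s ↔ x ∈ s then σ.subtypePerm h else 1
  have : (Finset.univ.filter fun σ : Equiv.Perm (Fin n) => σ.support ⊆ s).card ≤
      (Finset.univ : Finset (Equiv.Perm {x // x ∈ s})).card := by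
    apply Finset.card_le_card_of_injOn f (fun _ _ => Finset.mem_univ _)
    intro σ hσ τ hτ hfeq
    rw [Finset.mem_coe, Finset.mem_filter] at hσ hτ
    have hσ' := fun x => (key σ hσ.2 x).symm
    have hτ' := fun x => (key τ hτ.2 x).symm
    rw [show f σ = σ.subtypePerm hσ' from dif_pos hσ', show f τ = τ.subtypePerm hτ' from dif_pos hτ'] at hfeq
    ext x
    by_cases hx : x ∈ s
    · have := congrArg (fun (π : Equiv.Perm {x // x ∈ s}) => (π ⟨x, hx⟩ : Fin n)) hfeq
      exact congrArg Fin.val this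
    · have h1 : σ x = x := by
        by_contra hne
        exact hx (hσ.2 (Equiv.Perm.mem_support.2 hne))
      have h2 : τ x = x := by
        by_contra hne
        exact hx (hτ.2 (Equiv.Perm.mem_support.2 hne))
      rw [h1, h2]
  simpa [Fintype.card_perm, Fintype.card_coe] using this

lemma geom_tail {m : ℕ} {x : ℝ} (h0 : 0 ≤ x) (h : x ≤ 1/2) :
    ∑ k ∈ Finset.range m, (if 2 ≤ k then x^k else 0) ≤ 8 * x^2 := by
  have hhalf : ∑ k ∈ Finset.range m, ((1:ℝ)/2)^k ≤ 2 := by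
    rw [geom_sum_eq (by norm_num : (1:ℝ)/2 ≠ 1)]
    have : (0:ℝ) ≤ ((1:ℝ)/2)^m := by positivity
    have h1 : ((1:ℝ)/2)^m ≤ 1 := pow_le_one₀ (by norm_num) (by norm_num)
    have : ((1:ℝ)/2)^m - 1 ≤ 0 := by linarith
    rw [div_le_iff_of_neg (by norm_num : (1:ℝ)/2 - 1 < 0)]
    linarith
  have hterm : ∀ k, (if 2 ≤ k then x^k else 0) ≤ 4 * x^2 * ((1:ℝ)/2)^k := by
    intro k
    by_cases hk : 2 ≤ k
    · rw [if_pos hk]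
      obtain ⟨j, rfl⟩ : ∃ j, k = j + 2 := ⟨k - 2, by omega⟩
      have : x ^ (j + 2) = x^2 * x^j := by ring
      rw [this]
      have hxj : x^j ≤ ((1:ℝ)/2)^j := pow_le_pow_left₀ h0 h j
      have : ((1:ℝ)/2)^(j+2) = ((1:ℝ)/2)^j * (1/4) := by ring
      rw [this]
      nlinarith [sq_nonneg x, pow_nonneg h0 j, pow_nonneg (by norm_num : (0:ℝ) ≤ 1/2) j]
    · rw [if_neg hk]
      positivity
  calc ∑ k ∈ Finset.range m, (if 2 ≤ k then x^k else 0)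
      ≤ ∑ k ∈ Finset.range m, 4 * x^2 * ((1:ℝ)/2)^k := Finset.sum_le_sum fun k _ => hterm k
    _ = 4 * x^2 * ∑ k ∈ Finset.range m, ((1:ℝ)/2)^k := by rw [Finset.mul_sum]
    _ ≤ 4 * x^2 * 2 := by nlinarith [sq_nonneg x]
    _ = 8 * x^2 := by ring

lemma perm_tail_sum {n : ℕ} {ε : ℝ} (h0 : 0 ≤ ε) (h1 : (n:ℝ) * ε ≤ 1/2) :
    ∑ σ ∈ Finset.univ.erase (1 : Equiv.Perm (Fin n)), ε ^ σ.support.card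
      ≤ 8 * ((n:ℝ) * ε)^2 := by
  classical
  set t : Finset (Finset (Fin n)) :=
    Finset.univ.powerset.filter (fun u => 2 ≤ u.card) with ht
  have hmaps : ∀ σ ∈ Finset.univ.erase (1 : Equiv.Perm (Fin n)), σ.support ∈ t := by
    intro σ hσ
    rw [Finset.mem_erase] at hσ
    rw [ht, Finset.mem_filter, Finset.mem_powerset]
    exact ⟨Finset.subset_univ _, Equiv.Perm.one_lt_card_support_of_ne_one hσ.1⟩
  rw [← Finset.sum_fiberwise_of_maps_to hmaps (fun σ => ε ^ σ.support.card)]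
  have hfib : ∀ s ∈ t,
      ∑ σ ∈ (Finset.univ.erase (1 : Equiv.Perm (Fin n))).filter
          (fun σ => σ.support = s), ε ^ σ.support.card
        ≤ (Nat.factorial s.card : ℝ) * ε ^ s.card := by
    intro s _
    have heq : ∀ σ ∈ (Finset.univ.erase (1 : Equiv.Perm (Fin n))).filter
        (fun σ => σ.support = s), ε ^ σ.support.card = ε ^ s.card := by
      intro σ hσ
      rw [Finset.mem_filter] at hσ
      rw [hσ.2]
    rw [Finset.sum_congr rfl heq, Finset.sum_const, nsmul_eq_mul]
    have hsub : (Finset.univ.erase (1 : Equiv.Perm (Fin n))).filter (fun σ => σ.support = s)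
        ⊆ Finset.univ.filter (fun σ : Equiv.Perm (Fin n) => σ.support ⊆ s) := by
      intro σ hσ
      rw [Finset.mem_filter] at hσ ⊢
      exact ⟨Finset.mem_univ _, hσ.2.le⟩
    have hcard := (Finset.card_le_card hsub).trans (card_perm_support_subset s)
    have hε : (0:ℝ) ≤ ε ^ s.card := pow_nonneg h0 _
    exact mul_le_mul_of_nonneg_right (by exact_mod_cast hcard) hε
  calc ∑ s ∈ t, ∑ σ ∈ (Finset.univ.erase (1 : Equiv.Perm (Fin n))).filter
          (fun σ => σ.support = s), ε ^ σ.support.card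
      ≤ ∑ s ∈ t, (Nat.factorial s.card : ℝ) * ε ^ s.card := Finset.sum_le_sum hfib
    _ ≤ ∑ s ∈ (Finset.univ : Finset (Fin n)).powerset,
          (if 2 ≤ s.card then (Nat.factorial s.card : ℝ) * ε ^ s.card else 0) := by
        have e1 : ∑ s ∈ t, (Nat.factorial s.card : ℝ) * ε ^ s.card
            = ∑ s ∈ t, (if 2 ≤ s.card then (Nat.factorial s.card : ℝ) * ε ^ s.card else 0) := by
          apply Finset.sum_congr rfl
          intro s hs
          rw [ht, Finset.mem_filter] at hs
          rw [if_pos hs.2]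
        rw [e1, ht]
        apply Finset.sum_le_sum_of_subset_of_nonneg (Finset.filter_subset _ _)
        intro s _ _
        split
        · positivity
        · exact le_rfl
    _ = ∑ k ∈ Finset.range ((Finset.univ : Finset (Fin n)).card + 1),
          (Finset.univ : Finset (Fin n)).card.choose k •
            (if 2 ≤ k then (Nat.factorial k : ℝ) * ε ^ k else 0) :=
        Finset.sum_powerset_apply_card (x := Finset.univ) (fun k => if 2 ≤ k then (Nat.factorial k : ℝ) * ε ^ k else 0)
    _ ≤ ∑ k ∈ Finset.range (n + 1), (if 2 ≤ k then ((n:ℝ) * ε) ^ k else 0) := by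
        rw [Finset.card_univ, Fintype.card_fin]
        apply Finset.sum_le_sum
        intro k _
        rw [nsmul_eq_mul]
        split
        · have hdesc : (n.choose k * Nat.factorial k : ℝ) ≤ (n:ℝ)^k := by
            have h := Nat.descFactorial_le_pow n k
            rw [Nat.descFactorial_eq_factorial_mul_choose] at h
            calc (n.choose k * Nat.factorial k : ℝ) = ((Nat.factorial k * n.choose k : ℕ) : ℝ) := by
                  push_cast; ring
              _ ≤ ((n^k : ℕ) : ℝ) := by exact_mod_cast h
              _ = (n:ℝ)^k := by push_cast; ring
          have hεk : (0:ℝ) ≤ ε ^ k := pow_nonneg h0 _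
          calc (n.choose k : ℝ) * ((Nat.factorial k : ℝ) * ε ^ k)
              = ((n.choose k * Nat.factorial k : ℝ)) * ε ^ k := by ring
            _ ≤ (n:ℝ)^k * ε^k := mul_le_mul_of_nonneg_right hdesc hεk
            _ = ((n:ℝ) * ε)^k := (mul_pow _ _ _).symm
        · simp
    _ ≤ 8 * ((n:ℝ) * ε)^2 := geom_tail (by positivity) h1

lemma det_est {n : ℕ} (A : Matrix (Fin n) (Fin n) ℝ) {ε : ℝ} (h0 : 0 ≤ ε)
    (h1 : (n:ℝ) * ε ≤ 1/2) (hA : ∀ i j, |A i j| ≤ ε) :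
    |((1 : Matrix (Fin n) (Fin n) ℝ) - A).det - (1 - A.trace)| ≤ 17 * ((n:ℝ)*ε)^2 := by
  classical
  have hn0 : (0:ℝ) ≤ (n:ℝ) * ε := by positivity
  have entry : ∀ i j, ((1 : Matrix (Fin n) (Fin n) ℝ) - A) i j
      = (if i = j then 1 else 0) - A i j := by
    intro i j
    simp [Matrix.sub_apply, Matrix.one_apply]
  -- bound for each non-identity permutation term
  have hprod : ∀ σ : Equiv.Perm (Fin n),
      |∏ i, ((1 : Matrix (Fin n) (Fin n) ℝ) - A) (σ i) i| ≤ 2 * ε ^ σ.support.card := by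
    intro σ
    rw [Finset.abs_prod]
    have hle : ∀ i ∈ Finset.univ,
        |((1 : Matrix (Fin n) (Fin n) ℝ) - A) (σ i) i|
          ≤ (if σ i = i then 1 + ε else ε) := by
      intro i _
      by_cases h : σ i = i
      · rw [if_pos h, entry, if_pos h, h]
        calc |1 - A i i| ≤ |(1:ℝ)| + |A i i| := abs_sub _ _
          _ ≤ 1 + ε := by rw [abs_one]; linarith [hA i i]
      · rw [if_neg h, entry, if_neg h]
        rw [zero_sub, abs_neg]
        exact hA _ _
    calc ∏ i, |((1 : Matrix (Fin n) (Fin n) ℝ) - A) (σ i) i|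
        ≤ ∏ i, (if σ i = i then 1 + ε else ε) :=
          Finset.prod_le_prod (fun i _ => abs_nonneg _) hle
      _ = (1 + ε) ^ (Finset.univ.filter (fun i => σ i = i)).card
            * ε ^ (Finset.univ.filter (fun i => ¬ σ i = i)).card := by
          rw [Finset.prod_ite, Finset.prod_const, Finset.prod_const]
      _ ≤ 2 * ε ^ σ.support.card := by
          have hsupp : (Finset.univ.filter (fun i => ¬ σ i = i)) = σ.support := rfl
          rw [hsupp]
          have hfc : (Finset.univ.filter (fun i => σ i = i)).card ≤ n := by
            calc _ ≤ (Finset.univ : Finset (Fin n)).card := Finset.card_filter_le _ _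
              _ = n := by rw [Finset.card_univ, Fintype.card_fin]
          have h2 : (1 + ε) ^ (Finset.univ.filter (fun i => σ i = i)).card ≤ 2 := by
            calc (1 + ε) ^ (Finset.univ.filter (fun i => σ i = i)).card
                ≤ (1 + ε) ^ n := pow_le_pow_right₀ (by linarith) hfc
              _ ≤ 1 + 2 * n * ε := pow_one_add_le h0 h1
              _ ≤ 2 := by push_cast; nlinarith
          exact mul_le_mul_of_nonneg_right h2 (pow_nonneg h0 _)
  -- expand determinant
  rw [Matrix.det_apply']
  rw [← Finset.add_sum_erase Finset.univ _ (Finset.mem_univ (1 : Equiv.Perm (Fin n)))]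
  have hid : ((Equiv.Perm.sign (1 : Equiv.Perm (Fin n)) : ℤ) : ℝ)
      * ∏ i, ((1 : Matrix (Fin n) (Fin n) ℝ) - A) ((1 : Equiv.Perm (Fin n)) i) i
      = ∏ i, (1 + (-(A i i))) := by
    simp only [Equiv.Perm.sign_one, Units.val_one, Int.cast_one, one_mul,
      Equiv.Perm.one_apply]
    apply Finset.prod_congr rfl
    intro i _
    rw [entry, if_pos rfl]
    ring
  rw [hid]
  have htr : A.trace = ∑ i, A i i := by simp [Matrix.trace, Matrix.diag]
  have hsum_abs : ∑ i : Fin n, |(-(A i i))| ≤ (n:ℝ) * ε := by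
    calc ∑ i : Fin n, |(-(A i i))| ≤ ∑ _i : Fin n, ε := by
          apply Finset.sum_le_sum
          intro i _
          rw [abs_neg]; exact hA i i
      _ = (n:ℝ) * ε := by rw [Finset.sum_const, Finset.card_univ, Fintype.card_fin,
            nsmul_eq_mul]
  have hident : |(∏ i, (1 + (-(A i i)))) - (1 - A.trace)| ≤ ((n:ℝ)*ε)^2 := by
    have h := abs_prod_one_add_sub Finset.univ (fun i => -(A i i))
      (le_trans hsum_abs (by linarith))
    have he : (1 : ℝ) + ∑ i, (-(A i i)) = 1 - A.trace := by
      rw [htr, Finset.sum_neg_distrib]; ring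
    rw [he] at h
    calc |(∏ i, (1 + (-(A i i)))) - (1 - A.trace)| ≤ (∑ i : Fin n, |(-(A i i))|)^2 := h
      _ ≤ ((n:ℝ)*ε)^2 := by
          apply pow_le_pow_left₀ (Finset.sum_nonneg fun i _ => abs_nonneg _) hsum_abs
  have htail : |∑ σ ∈ Finset.univ.erase (1 : Equiv.Perm (Fin n)),
      ((Equiv.Perm.sign σ : ℤ) : ℝ) * ∏ i, ((1 : Matrix (Fin n) (Fin n) ℝ) - A) (σ i) i|
      ≤ 16 * ((n:ℝ)*ε)^2 := by
    calc |∑ σ ∈ Finset.univ.erase (1 : Equiv.Perm (Fin n)),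
        ((Equiv.Perm.sign σ : ℤ) : ℝ) * ∏ i, ((1 : Matrix (Fin n) (Fin n) ℝ) - A) (σ i) i|
        ≤ ∑ σ ∈ Finset.univ.erase (1 : Equiv.Perm (Fin n)),
          |((Equiv.Perm.sign σ : ℤ) : ℝ) * ∏ i, ((1 : Matrix (Fin n) (Fin n) ℝ) - A) (σ i) i| :=
          Finset.abs_sum_le_sum_abs _ _
      _ ≤ ∑ σ ∈ Finset.univ.erase (1 : Equiv.Perm (Fin n)), 2 * ε ^ σ.support.card := by
          apply Finset.sum_le_sum
          intro σ _
          rw [abs_mul]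
          have hsign : |((Equiv.Perm.sign σ : ℤ) : ℝ)| = 1 := by
            rcases Int.units_eq_one_or (Equiv.Perm.sign σ) with h | h <;> rw [h] <;> norm_num
          rw [hsign, one_mul]
          exact hprod σ
      _ = 2 * ∑ σ ∈ Finset.univ.erase (1 : Equiv.Perm (Fin n)), ε ^ σ.support.card := by
          rw [Finset.mul_sum]
      _ ≤ 2 * (8 * ((n:ℝ)*ε)^2) := by
          have := perm_tail_sum h0 h1
          linarith
      _ = 16 * ((n:ℝ)*ε)^2 := by ring
  calc |(∏ i, (1 + (-(A i i)))) + (∑ σ ∈ Finset.univ.erase (1 : Equiv.Perm (Fin n)),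
        ((Equiv.Perm.sign σ : ℤ) : ℝ) * ∏ i, ((1 : Matrix (Fin n) (Fin n) ℝ) - A) (σ i) i)
        - (1 - A.trace)|
      ≤ |(∏ i, (1 + (-(A i i)))) - (1 - A.trace)|
        + |∑ σ ∈ Finset.univ.erase (1 : Equiv.Perm (Fin n)),
          ((Equiv.Perm.sign σ : ℤ) : ℝ) * ∏ i, ((1 : Matrix (Fin n) (Fin n) ℝ) - A) (σ i) i| := by
        have : (∏ i, (1 + (-(A i i)))) + (∑ σ ∈ Finset.univ.erase (1 : Equiv.Perm (Fin n)),
            ((Equiv.Perm.sign σ : ℤ) : ℝ) * ∏ i, ((1 : Matrix (Fin n) (Fin n) ℝ) - A) (σ i) i)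
            - (1 - A.trace)
            = ((∏ i, (1 + (-(A i i)))) - (1 - A.trace))
              + (∑ σ ∈ Finset.univ.erase (1 : Equiv.Perm (Fin n)),
                ((Equiv.Perm.sign σ : ℤ) : ℝ) * ∏ i, ((1 : Matrix (Fin n) (Fin n) ℝ) - A) (σ i) i) := by
          ring
        rw [this]
        exact abs_add_le _ _
    _ ≤ ((n:ℝ)*ε)^2 + 16 * ((n:ℝ)*ε)^2 := by linarith
    _ = 17 * ((n:ℝ)*ε)^2 := by ring

section analysis
variable {d : ℕ} (U : EuclideanSpace ℝ (Fin d) → ℝ) {L : ℝ}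

lemma norm_single_one (i : Fin d) : ‖(EuclideanSpace.single i (1:ℝ))‖ = 1 := by
  rw [EuclideanSpace.norm_single]; norm_num

lemma hess_entry_bound (hHess : ∀ z, ‖iteratedFDeriv ℝ 2 U z‖ ≤ L) (z : EuclideanSpace ℝ (Fin d))
    (i j : Fin d) : |hessMat U z i j| ≤ L := by
  have h := (iteratedFDeriv ℝ 2 U z).le_opNorm ![EuclideanSpace.single i 1, EuclideanSpace.single j 1]
  rw [show ∏ k, ‖![EuclideanSpace.single i (1:ℝ), EuclideanSpace.single j 1] k‖ = 1 by
    rw [Fin.prod_univ_two]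
    simp [norm_single_one]] at h
  rw [mul_one] at h
  calc |hessMat U z i j| = ‖iteratedFDeriv ℝ 2 U z ![EuclideanSpace.single i 1, EuclideanSpace.single j 1]‖ := by
        rw [Real.norm_eq_abs]; rfl
    _ ≤ ‖iteratedFDeriv ℝ 2 U z‖ := h
    _ ≤ L := hHess z

lemma hess_lip (hU : ContDiff ℝ 3 U) (hD3 : ∀ z, ‖iteratedFDeriv ℝ 3 U z‖ ≤ L)
    (z w : EuclideanSpace ℝ (Fin d)) (i j : Fin d) :
    |hessMat U z i j - hessMat U w i j| ≤ L * ‖z - w‖ := by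
  have hdiff : ContDiff ℝ 1 (iteratedFDeriv ℝ 2 U) :=
    hU.iteratedFDeriv_right (by norm_num)
  have hfd : ∀ v : EuclideanSpace ℝ (Fin d), ‖fderiv ℝ (iteratedFDeriv ℝ 2 U) v‖ ≤ L := by
    intro v
    rw [norm_fderiv_iteratedFDeriv]
    exact hD3 v
  have lip : ‖iteratedFDeriv ℝ 2 U z - iteratedFDeriv ℝ 2 U w‖ ≤ L * ‖z - w‖ :=
    Convex.norm_image_sub_le_of_norm_fderiv_le
      (fun v _ => (hdiff.differentiable (by norm_num)).differentiableAt)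
      (fun v _ => hfd v) convex_univ (Set.mem_univ w) (Set.mem_univ z)
  have happ := (iteratedFDeriv ℝ 2 U z - iteratedFDeriv ℝ 2 U w).le_opNorm
      ![EuclideanSpace.single i 1, EuclideanSpace.single j 1]
  rw [show ∏ k, ‖![EuclideanSpace.single i (1:ℝ), EuclideanSpace.single j 1] k‖ = 1 by
    rw [Fin.prod_univ_two]; simp [norm_single_one]] at happ
  rw [mul_one] at happ
  calc |hessMat U z i j - hessMat U w i j|
      = ‖(iteratedFDeriv ℝ 2 U z - iteratedFDeriv ℝ 2 U w)
          ![EuclideanSpace.single i 1, EuclideanSpace.single j 1]‖ := by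
        rw [ContinuousMultilinearMap.sub_apply, Real.norm_eq_abs]; rfl
    _ ≤ ‖iteratedFDeriv ℝ 2 U z - iteratedFDeriv ℝ 2 U w‖ := happ
    _ ≤ L * ‖z - w‖ := lip

lemma grad_bound (hU : ContDiff ℝ 3 U) (hL : 0 < L) (hgrad0 : gradient U 0 = 0)
    (hHess : ∀ z, ‖iteratedFDeriv ℝ 2 U z‖ ≤ L) (y : EuclideanSpace ℝ (Fin d)) :
    ‖gradient U y‖ ≤ L * ‖y‖ := by
  have hfd2 : ∀ v : EuclideanSpace ℝ (Fin d), ‖fderiv ℝ (fderiv ℝ U) v‖ ≤ L := by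
    intro v
    apply ContinuousLinearMap.opNorm_le_bound _ hL.le
    intro a
    apply ContinuousLinearMap.opNorm_le_bound _ (by positivity)
    intro b
    have he : fderiv ℝ (fderiv ℝ U) v a b = iteratedFDeriv ℝ 2 U v ![a, b] := by
      rw [iteratedFDeriv_two_apply]
      simp
    rw [he]
    calc ‖iteratedFDeriv ℝ 2 U v ![a, b]‖
        ≤ ‖iteratedFDeriv ℝ 2 U v‖ * (‖a‖ * ‖b‖) := by
          have := (iteratedFDeriv ℝ 2 U v).le_opNorm ![a, b]
          rwa [show ∏ k, ‖![a, b] k‖ = ‖a‖ * ‖b‖ by rw [Fin.prod_univ_two]; simp] at this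
      _ ≤ L * (‖a‖ * ‖b‖) := by
          apply mul_le_mul_of_nonneg_right (hHess v) (by positivity)
      _ = L * ‖a‖ * ‖b‖ := by ring
  have hdiff : ContDiff ℝ 2 (fderiv ℝ U) := hU.fderiv_right (by norm_num)
  have lip : ‖fderiv ℝ U y - fderiv ℝ U 0‖ ≤ L * ‖y - 0‖ :=
    Convex.norm_image_sub_le_of_norm_fderiv_le
      (fun v _ => (hdiff.differentiable (by norm_num)).differentiableAt)
      (fun v _ => hfd2 v) convex_univ (Set.mem_univ 0) (Set.mem_univ y)
  have he : ‖gradient U y‖ = ‖fderiv ℝ U y - fderiv ℝ U 0‖ := by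
    have : gradient U y - gradient U 0
        = (InnerProductSpace.toDual ℝ (EuclideanSpace ℝ (Fin d))).symm
            (fderiv ℝ U y - fderiv ℝ U 0) := by
      rw [map_sub]; rfl
    calc ‖gradient U y‖ = ‖gradient U y - gradient U 0‖ := by rw [hgrad0, sub_zero]
      _ = ‖fderiv ℝ U y - fderiv ℝ U 0‖ := by
          rw [this, LinearIsometryEquiv.norm_map]
  rw [he]
  calc ‖fderiv ℝ U y - fderiv ℝ U 0‖ ≤ L * ‖y - 0‖ := lip
    _ = L * ‖y‖ := by rw [sub_zero]

end analysis

set_option maxHeartbeats 2000000 in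
theorem stmt4 {d : ℕ} (hd : 0 < d) (U : EuclideanSpace ℝ (Fin d) → ℝ)
    (L : ℝ) (hL : 0 < L) (hU : ContDiff ℝ 3 U)
    (hgrad0 : gradient U 0 = 0)
    (hHess : ∀ z, ‖iteratedFDeriv ℝ 2 U z‖ ≤ L)
    (hD3 : ∀ z, ‖iteratedFDeriv ℝ 3 U z‖ ≤ L)
    (T : EuclideanSpace ℝ (Fin d)) (hT : ‖T‖ ≤ Real.sqrt L)
    (δ : ℝ) (hδ0 : 0 < δ) (hδ : δ ≤ 1 / (64 * d ^ 2 * L))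
    (x y : EuclideanSpace ℝ (Fin d))
    (hxy : x = y - δ • gradient U y + Real.sqrt (2 * δ) • T) :
    IsUnit (1 - δ • hessMat U y) ∧
      |((1 - δ • hessMat U y).det)⁻¹ - (1 + δ * (hessMat U x).trace)| ≤
        8 * (δ * Real.sqrt δ) * (d : ℝ) * (L * Real.sqrt L) * (‖x‖ + 1) := by
  have hd1 : (1:ℝ) ≤ (d:ℝ) := by exact_mod_cast hd
  have hd0 : (0:ℝ) < (d:ℝ) := by linarith
  -- basic numeric facts
  have h64 : (0:ℝ) < 64 * (d:ℝ)^2 * L := by positivity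
  have hδ' : δ * (64 * (d:ℝ)^2 * L) ≤ 1 := by
    rw [← le_div_iff₀ h64]
    exact_mod_cast hδ
  set X : ℝ := (d:ℝ) * (δ * L) with hXdef
  have hX0 : 0 ≤ X := by positivity
  have hX : X ≤ 1/64 := by nlinarith
  have hδL : δ * L ≤ 1/64 := by nlinarith
  -- square roots
  set sδ := Real.sqrt δ with hsδ
  set sL := Real.sqrt L with hsL
  have hsδ0 : 0 < sδ := Real.sqrt_pos.2 hδ0
  have hsL0 : 0 < sL := Real.sqrt_pos.2 hL
  have eδ : sδ * sδ = δ := Real.mul_self_sqrt hδ0.le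
  have eL : sL * sL = L := Real.mul_self_sqrt hL.le
  have eδL : Real.sqrt (δ * L) = sδ * sL := Real.sqrt_mul hδ0.le L
  have hsδL : (d:ℝ) * (sδ * sL) ≤ 1/8 := by
    rw [← eδL]
    have h1 : δ * L ≤ (1/(8*(d:ℝ)))^2 := by
      have : (1/(8*(d:ℝ)))^2 = 1/(64*(d:ℝ)^2) := by
        field_simp; ring
      rw [this, le_div_iff₀ (by positivity)]
      nlinarith
    have h2 : Real.sqrt (δ * L) ≤ 1/(8*(d:ℝ)) := by
      calc Real.sqrt (δ * L) ≤ Real.sqrt ((1/(8*(d:ℝ)))^2) := Real.sqrt_le_sqrt h1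
        _ = 1/(8*(d:ℝ)) := Real.sqrt_sq (by positivity)
    calc (d:ℝ) * Real.sqrt (δ * L) ≤ (d:ℝ) * (1/(8*(d:ℝ))) :=
          mul_le_mul_of_nonneg_left h2 hd0.le
      _ = 1/8 := by field_simp
  -- determinant estimate
  set A := hessMat U y with hA
  set B := hessMat U x with hB
  have hAe : ∀ i j, |(δ • A) i j| ≤ δ * L := by
    intro i j
    rw [Matrix.smul_apply, smul_eq_mul, abs_mul, abs_of_pos hδ0]
    exact mul_le_mul_of_nonneg_left (hess_entry_bound U hHess y i j) hδ0.le
  have hdet := det_est (δ • A) (by positivity) (by rw [← hXdef] at *; linarith) hAe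
  rw [Matrix.trace_smul, smul_eq_mul] at hdet
  rw [← hXdef] at hdet
  have htrA : |A.trace| ≤ (d:ℝ) * L := by
    have htr : A.trace = ∑ i, A i i := by simp [Matrix.trace, Matrix.diag]
    calc |A.trace| = |∑ i, A i i| := by rw [htr]
      _ ≤ ∑ i : Fin d, |A i i| := Finset.abs_sum_le_sum_abs _ _
      _ ≤ ∑ _i : Fin d, L := Finset.sum_le_sum fun i _ => hess_entry_bound U hHess y i i
      _ = (d:ℝ) * L := by rw [Finset.sum_const, Finset.card_univ, Fintype.card_fin, nsmul_eq_mul]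
  have htrBA : |B.trace - A.trace| ≤ (d:ℝ) * (L * ‖x - y‖) := by
    have hh : B.trace - A.trace = ∑ i : Fin d, (B i i - A i i) := by
      simp [Matrix.trace, Matrix.diag, Finset.sum_sub_distrib]
    rw [hh]
    calc |∑ i : Fin d, (B i i - A i i)| ≤ ∑ i : Fin d, |B i i - A i i| :=
          Finset.abs_sum_le_sum_abs _ _
      _ ≤ ∑ _i : Fin d, L * ‖x - y‖ :=
          Finset.sum_le_sum fun i _ => hess_lip U hU hD3 x y i i
      _ = (d:ℝ) * (L * ‖x - y‖) := by
          rw [Finset.sum_const, Finset.card_univ, Fintype.card_fin, nsmul_eq_mul]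
  -- make scalars opaque
  obtain ⟨D, hDeq⟩ : ∃ D : ℝ, ((1 : Matrix (Fin d) (Fin d) ℝ) - δ • A).det = D := ⟨_, rfl⟩
  obtain ⟨tA, htAeq⟩ : ∃ r : ℝ, A.trace = r := ⟨_, rfl⟩
  obtain ⟨tB, htBeq⟩ : ∃ r : ℝ, B.trace = r := ⟨_, rfl⟩
  rw [hDeq, htAeq] at hdet
  rw [htAeq] at htrA
  rw [htAeq, htBeq] at htrBA
  have htrBA : |tB - tA| ≤ (d:ℝ) * (L * ‖x - y‖) := htrBA
  rw [hDeq, htBeq]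
  clear_value A B
  have hunit : D ≠ 0 → IsUnit ((1 : Matrix (Fin d) (Fin d) ℝ) - δ • A) := by
    intro h
    exact (Matrix.isUnit_iff_isUnit_det _).mpr (isUnit_iff_ne_zero.mpr (by rw [hDeq]; exact h))
  clear hDeq htAeq htBeq hAe hA hB
  set t := δ * tA with ht
  have htX : |t| ≤ X := by
    rw [ht, abs_mul, abs_of_pos hδ0, hXdef]
    calc δ * |tA| ≤ δ * ((d:ℝ) * L) := mul_le_mul_of_nonneg_left htrA hδ0.le
      _ = (d:ℝ) * (δ * L) := by ring
  have hX2 : X^2 ≤ 1/64 * X := by nlinarith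
  have hDlow : (9:ℝ)/10 ≤ D := by
    have h1 : D ≥ (1 - t) - 17 * X^2 := by
      have := abs_le.1 hdet
      linarith [this.1]
    have h2 := abs_le.1 htX
    linarith
  have hD0 : D ≠ 0 := by linarith
  refine ⟨hunit hD0, ?_⟩
  -- first piece : |det⁻¹ - (1+t)| ≤ 39 X²
  have hnum : |1 - D * (1 + t)| ≤ 35 * X^2 := by
    have hr : 1 - D * (1 + t) = t^2 - (D - (1 - t)) * (1 + t) := by ring
    rw [hr]
    have h1t : |1 + t| ≤ 2 := by
      have := abs_le.1 htX
      rw [abs_le]; constructor <;> linarith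
    calc |t^2 - (D - (1 - t)) * (1 + t)|
        ≤ |t^2| + |(D - (1 - t)) * (1 + t)| := abs_sub _ _
      _ ≤ X^2 + (17 * X^2) * 2 := by
          have e1 : |t^2| ≤ X^2 := by
            rw [abs_pow]
            exact pow_le_pow_left₀ (abs_nonneg _) htX 2
          have e2 : |(D - (1 - t)) * (1 + t)| ≤ (17 * X^2) * 2 := by
            rw [abs_mul]
            apply mul_le_mul hdet h1t (abs_nonneg _) (by positivity)
          linarith
      _ ≤ 35 * X^2 := by linarith [sq_nonneg X]
  have hfirst : |D⁻¹ - (1 + t)| ≤ 39 * X^2 := by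
    have hkey : D⁻¹ - (1 + t) = (1 - D * (1 + t)) / D := by
      field_simp
    rw [hkey, abs_div, abs_of_pos (by linarith : (0:ℝ) < D)]
    rw [div_le_iff₀ (by linarith : (0:ℝ) < D)]
    have hh : 39 * X^2 * (9/10) ≤ 39 * X^2 * D :=
      mul_le_mul_of_nonneg_left hDlow (by positivity)
    linarith [sq_nonneg X]
  -- second piece : trace move
  have hxmy : ‖x - y‖ ≤ δ * L * ‖y‖ + Real.sqrt 2 * (sδ * sL) := by
    have hs2 : Real.sqrt (2 * δ) * ‖T‖ ≤ Real.sqrt 2 * (sδ * sL) := by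
      have e2δ : Real.sqrt (2 * δ) = Real.sqrt 2 * sδ := Real.sqrt_mul (by norm_num) δ
      rw [e2δ, mul_assoc]
      apply mul_le_mul_of_nonneg_left _ (Real.sqrt_nonneg 2)
      exact mul_le_mul_of_nonneg_left hT hsδ0.le
    have hgd : ‖(δ • gradient U y : EuclideanSpace ℝ (Fin d))‖ ≤ δ * (L * ‖y‖) := by
      rw [norm_smul, Real.norm_eq_abs, abs_of_pos hδ0]
      exact mul_le_mul_of_nonneg_left (grad_bound U hU hL hgrad0 hHess y) hδ0.le
    have hrw : x - y = Real.sqrt (2 * δ) • T - δ • gradient U y := by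
      rw [hxy]; abel
    calc ‖x - y‖ = ‖Real.sqrt (2 * δ) • T - δ • gradient U y‖ := by rw [hrw]
      _ ≤ ‖Real.sqrt (2 * δ) • T‖ + ‖(δ • gradient U y : EuclideanSpace ℝ (Fin d))‖ :=
          norm_sub_le _ _
      _ ≤ Real.sqrt 2 * (sδ * sL) + δ * (L * ‖y‖) := by
          have : ‖Real.sqrt (2 * δ) • T‖ = Real.sqrt (2 * δ) * ‖T‖ := by
            rw [norm_smul, Real.norm_eq_abs, abs_of_nonneg (Real.sqrt_nonneg _)]
          rw [this]
          exact add_le_add hs2 hgd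
      _ = δ * L * ‖y‖ + Real.sqrt 2 * (sδ * sL) := by ring
  have hs2le : Real.sqrt 2 ≤ 2 := by
    calc Real.sqrt 2 ≤ Real.sqrt 4 := Real.sqrt_le_sqrt (by norm_num)
      _ = 2 := by
        rw [show (4:ℝ) = 2^2 by norm_num, Real.sqrt_sq (by norm_num)]
  have hsδsL : sδ * sL ≤ 1/8 := by
    have := mul_le_mul_of_nonneg_right hd1 (mul_pos hsδ0 hsL0).le
    rw [one_mul] at this
    linarith
  have hy2 : ‖y‖ ≤ 2 * (‖x‖ + 1) := by
    have h1 : ‖y‖ ≤ ‖x‖ + ‖x - y‖ := by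
      calc ‖y‖ = ‖x - (x - y)‖ := by rw [sub_sub_cancel]
        _ ≤ ‖x‖ + ‖x - y‖ := norm_sub_le _ _
    have h2 : Real.sqrt 2 * (sδ * sL) ≤ 1 := by
      have := mul_le_mul hs2le hsδsL (by positivity) (by norm_num)
      linarith
    have h3 : δ * L * ‖y‖ ≤ ‖y‖ / 2 := by
      have := mul_le_mul_of_nonneg_right hδL (norm_nonneg y)
      linarith [norm_nonneg y]
    linarith [norm_nonneg y, norm_nonneg (x - y)]
  -- assemble
  have hsplit : |D⁻¹ - (1 + δ * tB)| ≤ |D⁻¹ - (1 + t)| + δ * |tB - tA| := by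
    have hr : D⁻¹ - (1 + δ * tB)
        = (D⁻¹ - (1 + t)) - δ * (tB - tA) := by rw [ht]; ring
    rw [hr]
    calc |(D⁻¹ - (1 + t)) - δ * (tB - tA)|
        ≤ |D⁻¹ - (1 + t)| + |δ * (tB - tA)| := abs_sub _ _
      _ = |D⁻¹ - (1 + t)| + δ * |tB - tA| := by
          rw [abs_mul, abs_of_pos hδ0]
  have hx1 : (1:ℝ) ≤ ‖x‖ + 1 := by linarith [norm_nonneg x]
  calc |D⁻¹ - (1 + δ * tB)|
      ≤ |D⁻¹ - (1 + t)| + δ * |tB - tA| := hsplit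
    _ ≤ 39 * X^2 + δ * ((d:ℝ) * (L * (δ * L * ‖y‖ + Real.sqrt 2 * (sδ * sL)))) := by
        have h1 : δ * |tB - tA| ≤ δ * ((d:ℝ) * (L * ‖x - y‖)) :=
          mul_le_mul_of_nonneg_left htrBA hδ0.le
        have h2 : (d:ℝ) * (L * ‖x - y‖) ≤ (d:ℝ) * (L * (δ * L * ‖y‖ + Real.sqrt 2 * (sδ * sL))) := by
          apply mul_le_mul_of_nonneg_left _ hd0.le
          exact mul_le_mul_of_nonneg_left hxmy hL.le
        have h3 : δ * ((d:ℝ) * (L * ‖x - y‖)) ≤ δ * ((d:ℝ) * (L * (δ * L * ‖y‖ + Real.sqrt 2 * (sδ * sL)))) :=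
          mul_le_mul_of_nonneg_left h2 hδ0.le
        linarith
    _ ≤ 8 * (δ * sδ) * (d:ℝ) * (L * sL) * (‖x‖ + 1) := by
        -- convert everything to sδ, sL monomials
        have hyb : δ * ((d:ℝ) * (L * (δ * L * ‖y‖))) ≤ δ * ((d:ℝ) * (L * (δ * L * (2*(‖x‖+1))))) := by
          gcongr
        have hu0 : (0:ℝ) ≤ δ * sδ * (d:ℝ) * (L * sL) := by positivity
        -- key monomial bounds
        have k1 : 39 * X^2 ≤ (39/8) * (δ * sδ * (d:ℝ) * (L * sL)) := by
          have : X^2 = (δ * sδ * (d:ℝ) * (L * sL)) * ((d:ℝ) * (sδ * sL)) := by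
            rw [hXdef, ← eδ, ← eL]; ring
          rw [this]
          have hh := mul_le_mul_of_nonneg_left hsδL hu0
          linarith
        have k2 : δ * ((d:ℝ) * (L * (δ * L * (2*(‖x‖+1))))) ≤
            (1/4) * (δ * sδ * (d:ℝ) * (L * sL)) * (‖x‖+1) := by
          have e : δ * ((d:ℝ) * (L * (δ * L * (2*(‖x‖+1)))))
              = (δ * sδ * (d:ℝ) * (L * sL)) * (sδ * sL) * (2*(‖x‖+1)) := by
            rw [← eδ, ← eL]; ring
          rw [e]
          calc δ * sδ * (d:ℝ) * (L * sL) * (sδ * sL) * (2*(‖x‖+1))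
              ≤ δ * sδ * (d:ℝ) * (L * sL) * (1/8) * (2*(‖x‖+1)) := by
                apply mul_le_mul_of_nonneg_right
                  (mul_le_mul_of_nonneg_left hsδsL hu0) (by positivity)
            _ = (1/4) * (δ * sδ * (d:ℝ) * (L * sL)) * (‖x‖+1) := by ring
        have k3 : δ * ((d:ℝ) * (L * (Real.sqrt 2 * (sδ * sL)))) ≤
            2 * (δ * sδ * (d:ℝ) * (L * sL)) * (‖x‖+1) := by
          have e : δ * ((d:ℝ) * (L * (Real.sqrt 2 * (sδ * sL))))
              = (δ * sδ * (d:ℝ) * (L * sL)) * Real.sqrt 2 := by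
            rw [← eδ, ← eL]; ring
          rw [e]
          calc δ * sδ * (d:ℝ) * (L * sL) * Real.sqrt 2
              ≤ δ * sδ * (d:ℝ) * (L * sL) * 2 :=
                mul_le_mul_of_nonneg_left hs2le hu0
            _ = 2 * (δ * sδ * (d:ℝ) * (L * sL)) * 1 := by ring
            _ ≤ 2 * (δ * sδ * (d:ℝ) * (L * sL)) * (‖x‖+1) := by
                apply mul_le_mul_of_nonneg_left hx1 (by positivity)
        have expand : δ * ((d:ℝ) * (L * (δ * L * ‖y‖ + Real.sqrt 2 * (sδ * sL))))
            = δ * ((d:ℝ) * (L * (δ * L * ‖y‖))) + δ * ((d:ℝ) * (L * (Real.sqrt 2 * (sδ * sL)))) := by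
          ring
        rw [expand]
        have final : 39 * X^2 + (δ * ((d:ℝ) * (L * (δ * L * ‖y‖))) + δ * ((d:ℝ) * (L * (Real.sqrt 2 * (sδ * sL)))))
            ≤ (39/8) * (δ * sδ * (d:ℝ) * (L * sL))
              + (1/4) * (δ * sδ * (d:ℝ) * (L * sL)) * (‖x‖+1)
              + 2 * (δ * sδ * (d:ℝ) * (L * sL)) * (‖x‖+1) := by
          linarith
        calc 39 * X^2 + (δ * ((d:ℝ) * (L * (δ * L * ‖y‖))) + δ * ((d:ℝ) * (L * (Real.sqrt 2 * (sδ * sL)))))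
            ≤ (39/8) * (δ * sδ * (d:ℝ) * (L * sL))
              + (1/4) * (δ * sδ * (d:ℝ) * (L * sL)) * (‖x‖+1)
              + 2 * (δ * sδ * (d:ℝ) * (L * sL)) * (‖x‖+1) := final
          _ ≤ 8 * (δ * sδ) * (d:ℝ) * (L * sL) * (‖x‖ + 1) := by
              have hh := mul_le_mul_of_nonneg_left hx1 hu0
              have hh2 : (0:ℝ) ≤ (δ * sδ * (d:ℝ) * (L * sL)) * (‖x‖+1) :=
                mul_nonneg hu0 (by linarith)
              rw [mul_one] at hh
              nlinarith
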